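/- Let A → B be a map of commutative rings such that B is a finitely generated projective A-module, and write B^∨ := Hom_A(B, A), regarded as a B-module via (b · φ)(x) = φ(b * x). Then for every B-module M and every A-module N there is an isomorphism of abelian groups Hom_A(M ⊗_B B^∨, N) ≅ Hom_B(M, B ⊗_A N), natural in both M and N. In other words, the functor M ↦ M ⊗_B B^∨ from B-modules to A-modules is left adjoint to the base change functor N ↦ B ⊗_A N from A-modules to B-modules. -/

import Mathlib

open CategoryTheory

variable (A B : Type u) [CommRing A] [CommRing B] [Algebra A B]

/-- The `B`-module structure on `B^∨ = Hom_A(B, A)` given by `(b • φ) x = φ (b * x)`. -/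
instance dualModuleStruct : Module B (Module.Dual A B) where
  smul b φ := φ ∘ₗ LinearMap.mul A B b
  one_smul φ := by ext x; show φ (1 * x) = φ x; rw [one_mul]
  mul_smul b c φ := by
    ext x; show φ (b * c * x) = φ (c * (b * x)); congr 1; ring
  smul_zero b := by
    ext x; show (0 : Module.Dual A B) (b * x) = (0 : Module.Dual A B) x; simp
  smul_add b φ ψ := by
    ext x; show (φ + ψ) (b * x) = φ (b * x) + ψ (b * x); simp
  add_smul b c φ := by
    ext x; show φ ((b + c) * x) = φ (b * x) + φ (c * x); rw [add_mul, map_add]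
  zero_smul φ := by ext x; show φ (0 * x) = 0; simp

namespace TDAdjAux

open TensorProduct ModuleCat
open scoped ChangeOfRings

variable {A B}

lemma dual_smul_apply (b : B) (φ : Module.Dual A B) (x : B) : (b • φ) x = φ (b * x) := rfl

lemma dual_algebraMap_smul (a : A) (φ : Module.Dual A B) :
    (algebraMap A B a) • φ = a • φ := by
  ext x
  rw [dual_smul_apply, ← Algebra.smul_def, map_smul]
  rfl

/-- Contraction `B ⊗[A] N →+ N`, `b ⊗ n ↦ φ b • n`. -/
noncomputable def contract (N : ModuleCat.{u} A) (φ : Module.Dual A B) :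
    ((ModuleCat.extendScalars (algebraMap A B)).obj N : Type u) →+ N :=
  TensorProduct.liftAddHom
    { toFun := fun b =>
        { toFun := fun n => φ b • n
          map_zero' := smul_zero _
          map_add' := fun _ _ => smul_add _ _ _ }
      map_zero' := by ext n; show φ 0 • n = 0; rw [map_zero, zero_smul]
      map_add' := fun b c => by ext n; exact (congrArg (· • n) (map_add φ b c)).trans (add_smul _ _ _) }
    (fun a b n => by
      show φ ((algebraMap A B a) * (show B from b)) • n = φ (show B from b) • (a • n)
      rw [← Algebra.smul_def, map_smul, smul_eq_mul, mul_comm, mul_smul])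

lemma es_induction (N : ModuleCat.{u} A)
    {P : ((ModuleCat.extendScalars (algebraMap A B)).obj N : Type u) → Prop}
    (t : ((ModuleCat.extendScalars (algebraMap A B)).obj N : Type u)) (zero : P 0)
    (tmul : ∀ (b : B) (n : N), P (b ⊗ₜ[A, algebraMap A B] n))
    (add : ∀ x y, P x → P y → P (x + y)) : P t :=
  TensorProduct.induction_on (motive := P) t zero (fun b n => tmul b n) add

@[simp] lemma contract_tmul (N : ModuleCat.{u} A) (φ : Module.Dual A B) (b : B) (n : N) :
    contract N φ (b ⊗ₜ[A, algebraMap A B] n) = φ b • n := rfl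


lemma contract_smulB (N : ModuleCat.{u} A) (s : B) (φ : Module.Dual A B)
    (t : ((ModuleCat.extendScalars (algebraMap A B)).obj N : Type u)) :
    contract N φ (s • t) = contract N (s • φ) t := by
  induction t using es_induction with
  | zero => rw [smul_zero, map_zero, map_zero]
  | tmul b n => rfl
  | add t₁ t₂ h₁ h₂ => rw [smul_add, map_add, map_add, h₁, h₂]

lemma contract_smulA (N : ModuleCat.{u} A) (a : A) (φ : Module.Dual A B)
    (t : ((ModuleCat.extendScalars (algebraMap A B)).obj N : Type u)) :
    contract N (a • φ) t = a • contract N φ t := by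
  induction t using es_induction with
  | zero => simp
  | tmul b n =>
      rw [contract_tmul, contract_tmul, LinearMap.smul_apply, smul_eq_mul, mul_smul]
  | add t₁ t₂ h₁ h₂ => rw [map_add, map_add, h₁, h₂, smul_add]

lemma contract_addφ (N : ModuleCat.{u} A) (φ ψ : Module.Dual A B)
    (t : ((ModuleCat.extendScalars (algebraMap A B)).obj N : Type u)) :
    contract N (φ + ψ) t = contract N φ t + contract N ψ t := by
  induction t using es_induction with
  | zero => simp
  | tmul b n => rw [contract_tmul, contract_tmul, contract_tmul, LinearMap.add_apply, add_smul]
  | add t₁ t₂ h₁ h₂ =>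
      rw [map_add, map_add, map_add, h₁, h₂]; abel

/-- The domain of the left-hand homs: `M ⊗[B] B^∨` restricted to `A`. -/
abbrev TR (M : ModuleCat.{u} B) : Type u :=
  ((ModuleCat.restrictScalars (algebraMap A B)).obj
    ((MonoidalCategory.tensorRight (ModuleCat.of B (Module.Dual A B))).obj M) : Type u)

lemma tr_induction (M : ModuleCat.{u} B) {P : TR (A := A) M → Prop} (t : TR (A := A) M)
    (zero : P 0) (tmul : ∀ (m : M) (φ : Module.Dual A B), P (m ⊗ₜ[B] φ : TR (A := A) M))
    (add : ∀ x y, P x → P y → P (x + y)) : P t :=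
  TensorProduct.induction_on (motive := P) t zero tmul add

/-- `B` seen as an `A`-module by restriction of scalars, as used inside `extendScalars`. -/
abbrev BR : Type u :=
  ((ModuleCat.restrictScalars (algebraMap A B)).obj
    (@ModuleCat.of B _ B _ Semiring.toModule) : Type u)

/-- The pure tensor `b ⊗ₜ n` in `(extendScalars (algebraMap A B)).obj N`. -/
noncomputable def tm (N : ModuleCat.{u} A) (b : BR (A := A) (B := B)) (n : N) :
    ((ModuleCat.extendScalars (algebraMap A B)).obj N : Type u) :=
  b ⊗ₜ[A, algebraMap A B] n

@[simp] lemma contract_tm (N : ModuleCat.{u} A) (φ : Module.Dual A B) (b : B) (n : N) :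
    contract N φ (tm N b n) = φ b • n := rfl

lemma tm_add_right (N : ModuleCat.{u} A) (b : B) (n n' : N) :
    tm N b (n + n') = tm N b n + tm N b n' :=
  TensorProduct.tmul_add _ _ _

lemma tm_smul_right (N : ModuleCat.{u} A) (a : A) (b : BR (A := A) (B := B)) (n : N) :
    tm N (a • b) n = tm N b (a • n) :=
  TensorProduct.smul_tmul (R := A) (M := BR (A := A) (B := B)) (N := N) a b n

lemma br_smul (a : A) (b : B) :
    a • (show BR (A := A) (B := B) from b) = (show BR (A := A) (B := B) from a • b) := by
  show algebraMap A B a * b = _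
  rw [Algebra.smul_def]

lemma smul_tm (N : ModuleCat.{u} A) (s : B) (b : B) (n : N) :
    s • tm N b n = tm N (s * b) n :=
  ModuleCat.ExtendScalars.smul_tmul _ _ _ _

lemma tm_zero_right (N : ModuleCat.{u} A) (b : B) : tm N b 0 = 0 :=
  TensorProduct.tmul_zero _ _

lemma tm_sum_right (N : ModuleCat.{u} A) (b : B) {ι : Type} (s : Finset ι) (x : ι → N) :
    tm N b (∑ i ∈ s, x i) = ∑ i ∈ s, tm N b (x i) := by
  classical
  induction s using Finset.induction_on with
  | empty => simp [tm_zero_right]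
  | @insert _ _ hnot ih =>
      rw [Finset.sum_insert hnot, Finset.sum_insert hnot, tm_add_right, ih]

lemma sum_tm_left (N : ModuleCat.{u} A) {ι : Type} (s : Finset ι)
    (c : ι → BR (A := A) (B := B)) (n : N) :
    tm N (∑ i ∈ s, c i) n = ∑ i ∈ s, tm N (c i) n :=
  TensorProduct.sum_tmul s c n

/-- Contraction with `0` is `0`. -/
lemma contract_zeroφ' (N : ModuleCat.{u} A)
    (t : ((ModuleCat.extendScalars (algebraMap A B)).obj N : Type u)) :
    contract N (0 : Module.Dual A B) t = 0 := by
  induction t using es_induction with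
  | zero => simp
  | tmul b n => rw [contract_tmul]; simp
  | add t₁ t₂ h₁ h₂ => rw [map_add, h₁, h₂, add_zero]

/-- The backward direction of the hom equivalence, as an additive map. -/
noncomputable def backAux (M : ModuleCat.{u} B) (N : ModuleCat.{u} A)
    (k : M ⟶ (ModuleCat.extendScalars (algebraMap A B)).obj N) :
    (↑M ⊗[B] Module.Dual A B) →+ N :=
  TensorProduct.liftAddHom
    { toFun := fun m =>
        { toFun := fun φ => contract N φ (k m)
          map_zero' := contract_zeroφ' N (k m)
          map_add' := fun φ ψ => contract_addφ N φ ψ (k m) }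
      map_zero' := by ext φ; simp
      map_add' := fun m m' => by ext φ; simp [map_add] }
    (fun s m φ => by
      show contract N φ (k (s • m)) = contract N (s • φ) (k m)
      rw [map_smul k.hom, contract_smulB])

@[simp] lemma backAux_tmul (M : ModuleCat.{u} B) (N : ModuleCat.{u} A)
    (k : M ⟶ (ModuleCat.extendScalars (algebraMap A B)).obj N) (m : M) (φ : Module.Dual A B) :
    backAux M N k (m ⊗ₜ[B] φ) = contract N φ (k m) := rfl

/-- The backward direction of the hom equivalence. -/
noncomputable def backward (M : ModuleCat.{u} B) (N : ModuleCat.{u} A)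
    (k : M ⟶ (ModuleCat.extendScalars (algebraMap A B)).obj N) :
    (ModuleCat.restrictScalars (algebraMap A B)).obj
        ((MonoidalCategory.tensorRight (ModuleCat.of B (Module.Dual A B))).obj M) ⟶ N := ModuleCat.ofHom (X := TR M) (Y := N) {
  toFun := backAux M N k
  map_add' := (backAux M N k).map_add
  map_smul' a t := by
    dsimp only [RingHom.id_apply]
    induction t using tr_induction with
    | zero => exact (congrArg (backAux M N k) (smul_zero a : a • (0 : TR M) = 0)).trans ((map_zero _).trans (smul_zero a).symm)
    | tmul m φ =>
        show backAux M N k ((algebraMap A B a • m) ⊗ₜ[B] φ) = a • backAux M N k (m ⊗ₜ[B] φ)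
        rw [backAux_tmul, backAux_tmul, map_smul k.hom, contract_smulB, dual_algebraMap_smul,
          contract_smulA]
    | add t₁ t₂ h₁ h₂ =>
      exact (congrArg (backAux M N k) (smul_add a t₁ t₂)).trans ((map_add _ _ _).trans
        ((congrArg₂ (· + ·) h₁ h₂).trans ((smul_add a _ _).symm.trans
          (congrArg (a • ·) (map_add _ _ _).symm)))) }

lemma h_add (M : ModuleCat.{u} B) (N : ModuleCat.{u} A)
    (h : (ModuleCat.restrictScalars (algebraMap A B)).obj
        ((MonoidalCategory.tensorRight (ModuleCat.of B (Module.Dual A B))).obj M) ⟶ N)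
    (x y : ↑M ⊗[B] Module.Dual A B) : h (x + y) = h x + h y :=
  map_add h.hom x y

lemma h_sum (M : ModuleCat.{u} B) (N : ModuleCat.{u} A)
    (h : (ModuleCat.restrictScalars (algebraMap A B)).obj
        ((MonoidalCategory.tensorRight (ModuleCat.of B (Module.Dual A B))).obj M) ⟶ N)
    {ι : Type} (s : Finset ι) (f : ι → ↑M ⊗[B] Module.Dual A B) :
    h (∑ j ∈ s, f j) = ∑ j ∈ s, h (f j) :=
  map_sum h.hom f s

section Basis

variable {ι : Type} [Fintype ι] (bb : ι → B) (ff : ι → Module.Dual A B)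
variable (hdb : ∀ x : B, ∑ i, ff i x • bb i = x)

include hdb

lemma hdb' (x : B) :
    (∑ i, ff i x • (show BR (A := A) (B := B) from bb i)) = (show BR (A := A) (B := B) from x) := by
  rw [Finset.sum_congr rfl fun i _ => br_smul (ff i x) (bb i)]
  exact hdb x

lemma sum_tm_contract (N : ModuleCat.{u} A)
    (t : ((ModuleCat.extendScalars (algebraMap A B)).obj N : Type u)) :
    ∑ i, tm N (bb i) (contract N (ff i) t) = t := by
  induction t using es_induction with
  | zero => simp [tm_zero_right]
  | tmul b n =>
      have hb : (b ⊗ₜ[A, algebraMap A B] n : ((ModuleCat.extendScalars (algebraMap A B)).obj N : Type u))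
          = tm N b n := rfl
      rw [hb]
      have step : ∀ i, tm N (bb i) (contract N (ff i) (tm N b n))
          = tm N (ff i b • (show BR (A := A) (B := B) from bb i)) n := by
        intro i; rw [contract_tm, tm_smul_right]
      rw [Finset.sum_congr rfl fun i _ => step i, ← sum_tm_left, hdb' bb ff hdb]
  | add t₁ t₂ h₁ h₂ =>
      simp only [map_add, tm_add_right, Finset.sum_add_distrib, h₁, h₂]

lemma dual_basis_expand (φ : Module.Dual A B) : ∑ i, φ (bb i) • ff i = φ := by
  ext x
  simp only [LinearMap.coe_sum, Finset.sum_apply, LinearMap.smul_apply, smul_eq_mul]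
  conv_rhs => rw [← hdb x, map_sum]
  refine Finset.sum_congr rfl fun i _ => ?_
  rw [map_smul, smul_eq_mul, mul_comm]

lemma smul_dual_expand (s : B) (φ : Module.Dual A B) :
    ∑ i, (φ (s * bb i)) • ff i = s • φ := by
  ext x
  simp only [LinearMap.coe_sum, Finset.sum_apply, LinearMap.smul_apply, smul_eq_mul,
    dual_smul_apply]
  conv_rhs => rw [← hdb x]
  rw [Finset.mul_sum, map_sum]
  refine Finset.sum_congr rfl fun i _ => ?_
  rw [mul_smul_comm, map_smul, smul_eq_mul, mul_comm]



/-- The forward direction of the hom equivalence. -/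
noncomputable def forward (M : ModuleCat.{u} B) (N : ModuleCat.{u} A)
    (h : (ModuleCat.restrictScalars (algebraMap A B)).obj
        ((MonoidalCategory.tensorRight (ModuleCat.of B (Module.Dual A B))).obj M) ⟶ N) :
    M ⟶ (ModuleCat.extendScalars (algebraMap A B)).obj N := ModuleCat.ofHom (X := M)
    (Y := (ModuleCat.extendScalars (algebraMap A B)).obj N) {
  toFun m := ∑ i, tm N (bb i) (h (m ⊗ₜ[B] ff i))
  map_add' m m' := by
    simp only [TensorProduct.add_tmul, h_add, tm_add_right, Finset.sum_add_distrib]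
  map_smul' s m := by
    dsimp only
    have e1 : ∀ i, h ((s • m) ⊗ₜ[B] ff i) = ∑ j, ff i (s * bb j) • h (m ⊗ₜ[B] ff j) := by
      intro i
      rw [show ((s • m) ⊗ₜ[B] ff i : ↑M ⊗[B] Module.Dual A B) = m ⊗ₜ[B] (s • ff i) from
        TensorProduct.smul_tmul s m (ff i), ← smul_dual_expand bb ff hdb s (ff i),
        TensorProduct.tmul_sum]
      erw [h_sum]
      refine Finset.sum_congr rfl fun j _ => ?_
      rw [← dual_algebraMap_smul (ff i (s * bb j)) (ff j), TensorProduct.tmul_smul]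
      exact map_smul h.hom (ff i (s * bb j)) (show TR M from m ⊗ₜ[B] ff j)
    rw [Finset.sum_congr rfl fun i _ => congrArg (tm N (bb i)) (e1 i)]
    rw [Finset.sum_congr rfl fun i _ => tm_sum_right N (bb i) Finset.univ
      (fun j => ff i (s * bb j) • h (m ⊗ₜ[B] ff j))]
    rw [Finset.sum_congr rfl fun i _ => Finset.sum_congr rfl fun j _ =>
      (tm_smul_right N (ff i (s * bb j)) (bb i) (h (m ⊗ₜ[B] ff j))).symm]
    rw [Finset.sum_comm]
    rw [Finset.sum_congr rfl fun j _ => (sum_tm_left N Finset.univ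
      (fun i => ff i (s * bb j) • (show BR (A := A) (B := B) from bb i)) (h (m ⊗ₜ[B] ff j))).symm]
    rw [Finset.sum_congr rfl fun j _ => congrArg (fun x => tm N x (h (m ⊗ₜ[B] ff j)))
      (hdb' bb ff hdb (s * bb j))]
    rw [Finset.sum_congr rfl fun j _ => (smul_tm N s (bb j) (h (m ⊗ₜ[B] ff j))).symm]
    rw [← Finset.smul_sum]
    rfl }


lemma left_inv_tmul (M : ModuleCat.{u} B) (N : ModuleCat.{u} A)
    (h : (ModuleCat.restrictScalars (algebraMap A B)).obj
        ((MonoidalCategory.tensorRight (ModuleCat.of B (Module.Dual A B))).obj M) ⟶ N)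
    (m : M) (φ : Module.Dual A B) :
    backAux M N (forward bb ff hdb M N h) (m ⊗ₜ[B] φ) = h (m ⊗ₜ[B] φ) := by
  rw [backAux_tmul]
  show contract N φ (∑ i, tm N (bb i) (h (m ⊗ₜ[B] ff i))) = _
  rw [map_sum]
  rw [Finset.sum_congr rfl fun i _ => contract_tm N φ (bb i) (h (m ⊗ₜ[B] ff i))]
  have e1 : ∀ i, φ (bb i) • h (m ⊗ₜ[B] ff i) = h (m ⊗ₜ[B] (φ (bb i) • ff i)) := by
    intro i
    rw [← map_smul h.hom (φ (bb i)) (show TR M from m ⊗ₜ[B] ff i)]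
    congr 1
    show (algebraMap A B (φ (bb i))) • (m ⊗ₜ[B] ff i : ↑M ⊗[B] Module.Dual A B)
        = m ⊗ₜ[B] (φ (bb i) • ff i)
    rw [TensorProduct.smul_tmul', TensorProduct.smul_tmul, dual_algebraMap_smul]
  rw [Finset.sum_congr rfl fun i _ => e1 i, ← h_sum]
  erw [← TensorProduct.tmul_sum, dual_basis_expand bb ff hdb φ]

lemma left_inv (M : ModuleCat.{u} B) (N : ModuleCat.{u} A)
    (h : (ModuleCat.restrictScalars (algebraMap A B)).obj
        ((MonoidalCategory.tensorRight (ModuleCat.of B (Module.Dual A B))).obj M) ⟶ N) :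
    backward M N (forward bb ff hdb M N h) = h := by
  apply ModuleCat.hom_ext; apply LinearMap.ext
  intro t
  induction t using tr_induction with
  | zero => rw [map_zero, map_zero]
  | tmul m φ => exact left_inv_tmul bb ff hdb M N h m φ
  | add t₁ t₂ h₁ h₂ => rw [map_add, map_add, h₁, h₂]

lemma right_inv (M : ModuleCat.{u} B) (N : ModuleCat.{u} A)
    (k : M ⟶ (ModuleCat.extendScalars (algebraMap A B)).obj N) :
    forward bb ff hdb M N (backward M N k) = k := by
  apply ModuleCat.hom_ext; apply LinearMap.ext
  intro m
  show ∑ i, tm N (bb i) (backAux M N k (m ⊗ₜ[B] ff i)) = k m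
  rw [Finset.sum_congr rfl fun i _ => congrArg (tm N (bb i)) (backAux_tmul M N k m (ff i))]
  exact sum_tm_contract bb ff hdb N (k m)

/-- The adjunction. -/
noncomputable def adj :
    (MonoidalCategory.tensorRight (ModuleCat.of B (Module.Dual A B)) ⋙
        ModuleCat.restrictScalars (algebraMap A B)) ⊣
      ModuleCat.extendScalars (algebraMap A B) :=
  Adjunction.mkOfHomEquiv
    { homEquiv := fun M N =>
        { toFun := forward bb ff hdb M N
          invFun := backward M N
          left_inv := left_inv bb ff hdb M N
          right_inv := right_inv bb ff hdb M N }
      homEquiv_naturality_left_symm := by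
        intro M' M N g k
        apply ModuleCat.hom_ext; apply LinearMap.ext
        intro t
        induction t using tr_induction with
        | zero => rw [map_zero, map_zero]
        | tmul m' φ => rfl
        | add t₁ t₂ h₁ h₂ => rw [map_add, map_add, h₁, h₂]
      homEquiv_naturality_right := by
        intro M N N' h g
        apply ModuleCat.hom_ext; apply LinearMap.ext
        intro m
        show ∑ i, tm N' (bb i) (g (h (m ⊗ₜ[B] ff i)))
            = (ModuleCat.extendScalars (algebraMap A B)).map g (∑ i, tm N (bb i) (h (m ⊗ₜ[B] ff i)))
        rw [map_sum]
        rfl }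

end Basis

end TDAdjAux

/-- If `B` is a finitely generated projective `A`-module, then the functor
`M ↦ M ⊗_B B^∨` from `B`-modules to `A`-modules is left adjoint to the base change functor
`N ↦ B ⊗_A N` from `A`-modules to `B`-modules; i.e. there are isomorphisms
`Hom_A(M ⊗_B B^∨, N) ≅ Hom_B(M, B ⊗_A N)` natural in `M` and `N`. -/
theorem tensor_dual_adjoint_extendScalars
    [Module.Finite A B] [Module.Projective A B] :
    Nonempty
      ((MonoidalCategory.tensorRight (ModuleCat.of B (Module.Dual A B)) ⋙
          ModuleCat.restrictScalars (algebraMap A B)) ⊣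
        ModuleCat.extendScalars (algebraMap A B)) := by
  obtain ⟨n, p, q, -, -, hpq⟩ := Module.Finite.exists_comp_eq_id_of_projective A B
  refine ⟨TDAdjAux.adj (fun i => p (fun j => if i = j then 1 else 0))
    (fun i => (LinearMap.proj i).comp q) ?_⟩
  intro x
  have e : ∀ i : Fin n, ((LinearMap.proj i).comp q) x • p (fun j => if i = j then (1 : A) else 0)
      = p (q x i • fun j => if i = j then (1 : A) else 0) := fun i => (map_smul p _ _).symm
  rw [Finset.sum_congr rfl fun i _ => e i, ← map_sum, ← pi_eq_sum_univ (q x)]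
  exact DFunLike.congr_fun hpq x
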